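/- arXiv:2505.04118 — 2 statements merged into one kernel-verified Lean document; each statement's English description precedes it below -/
import Mathlib

section
/- Let ρ : ℝ≥0 → ℝ≥0 be non-decreasing with ρ(t) → ∞ as t → ∞, ρ(0) = 0, and ρ(t) = 1 for all t ∈ (0,1]. Define ρ̃(t) = min(√t / 2, ρ(√t / 2)). Then ρ̃ is non-decreasing, ρ̃(t) → ∞ as t → ∞, and for every n ∈ ℕ and every tuple (t₁,…,tₙ) of non-negative reals, one has ∑ᵢ ρ(tᵢ) ≥ ρ̃(∑ᵢ tᵢ). -/
open scoped NNReal

/-- Subadditivity lemma: from a normalized lower control `ρ` one builds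
`ρ̃(t) = min(√t/2, ρ(√t/2))`, which is non-decreasing, tends to infinity, and satisfies
`∑ ρ(tᵢ) ≥ ρ̃(∑ tᵢ)` for all finite tuples of non-negative reals. -/
theorem subadditivity_lemma (ρ : ℝ≥0 → ℝ≥0) (hmono : Monotone ρ)
    (htop : Filter.Tendsto ρ Filter.atTop Filter.atTop)
    (h0 : ρ 0 = 0) (h1 : ∀ t : ℝ≥0, 0 < t → t ≤ 1 → ρ t = 1) :
    Monotone (fun t : ℝ≥0 => min (NNReal.sqrt t / 2) (ρ (NNReal.sqrt t / 2))) ∧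
    Filter.Tendsto (fun t : ℝ≥0 => min (NNReal.sqrt t / 2) (ρ (NNReal.sqrt t / 2)))
      Filter.atTop Filter.atTop ∧
    ∀ (n : ℕ) (t : Fin n → ℝ≥0),
      min (NNReal.sqrt (∑ i, t i) / 2) (ρ (NNReal.sqrt (∑ i, t i) / 2)) ≤ ∑ i, ρ (t i) := by
  have hρ1 : ∀ t : ℝ≥0, t ≠ 0 → 1 ≤ ρ t := by
    intro t ht
    rcases le_or_gt t 1 with h | h
    · exact (h1 t (zero_lt_iff.mpr ht) h).ge
    · rw [← h1 1 one_pos le_rfl]; exact hmono h.le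
  have hsq : Filter.Tendsto (fun t : ℝ≥0 => NNReal.sqrt t / 2) Filter.atTop Filter.atTop := by
    rw [Filter.tendsto_atTop]
    intro b
    refine Filter.eventually_atTop.2 ⟨(b * 2) ^ 2, fun t ht => ?_⟩
    rw [le_div_iff₀ (by norm_num)]
    calc b * 2 = NNReal.sqrt ((b * 2) ^ 2) := (NNReal.sqrt_sq _).symm
      _ ≤ NNReal.sqrt t := NNReal.sqrt_le_sqrt.2 ht
  refine ⟨?_, ?_, ?_⟩
  · intro a b hab
    have h : NNReal.sqrt a / 2 ≤ NNReal.sqrt b / 2 :=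
      div_le_div_of_nonneg_right (NNReal.sqrt_le_sqrt.2 hab) (by norm_num)
    exact min_le_min h (hmono h)
  · rw [Filter.tendsto_atTop]
    intro b
    filter_upwards [hsq.eventually_ge_atTop b, (htop.comp hsq).eventually_ge_atTop b]
      with t h1' h2'
    exact le_min h1' h2'
  · intro n t
    set T := ∑ i, t i with hTdef
    set s := NNReal.sqrt T / 2 with hsdef
    by_cases hT : T = 0
    · have : s = 0 := by simp [hsdef, hT]
      simp [this, h0]
    by_cases hA : ∃ i, s ≤ t i
    · obtain ⟨i, hi⟩ := hA
      calc min s (ρ s) ≤ ρ s := min_le_right _ _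
        _ ≤ ρ (t i) := hmono hi
        _ ≤ ∑ j, ρ (t j) := Finset.single_le_sum (f := fun j => ρ (t j)) (fun _ _ => zero_le) (Finset.mem_univ i)
    · push_neg at hA
      set K := Finset.univ.filter (fun i => t i ≠ 0) with hKdef
      have hk : (K.card : ℝ≥0) ≤ ∑ i, ρ (t i) := by
        calc (K.card : ℝ≥0) = ∑ _i ∈ K, (1 : ℝ≥0) := by simp
          _ ≤ ∑ i ∈ K, ρ (t i) :=
            Finset.sum_le_sum (fun i hi => hρ1 _ (Finset.mem_filter.mp hi).2)
          _ ≤ ∑ i, ρ (t i) :=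
            Finset.sum_le_sum_of_subset (Finset.filter_subset _ _)
      have hTk : T ≤ K.card * s := by
        calc T = ∑ i ∈ K, t i := by
              rw [hTdef]
              exact (Finset.sum_filter_ne_zero _).symm
          _ ≤ ∑ _i ∈ K, s := Finset.sum_le_sum (fun i _ => (hA i).le)
          _ = K.card * s := by simp [mul_comm]
      have hs0 : s ≠ 0 := by
        simp [hsdef, NNReal.sqrt_eq_zero, hT]
      have h4 : 4 * s * s = T := by
        have h := NNReal.mul_self_sqrt T
        rw [hsdef, mul_assoc, div_mul_div_comm, h]
        rw [show (2:ℝ≥0) * 2 = 4 by norm_num]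
        rw [mul_div_cancel₀ _ (by norm_num : (4:ℝ≥0) ≠ 0)]
      have hsk : s ≤ (K.card : ℝ≥0) := by
        have h1'' : 4 * s * s ≤ K.card * s := by rw [h4]; exact hTk
        have h2'' : 4 * s ≤ K.card := le_of_mul_le_mul_right h1'' (zero_lt_iff.mpr hs0)
        calc s ≤ 4 * s := le_mul_of_one_le_left zero_le (by norm_num)
          _ ≤ K.card := h2''
      exact le_trans (min_le_left _ _) (le_trans hsk hk)
end

section
/- Let {B_i}_{i∈I} be a family of uniformly convex Banach spaces indexed by an arbitrary (possibly uncountable) set I, possessing a common modulus of convexity δ(ε) > 0 (i.e., each B_i has modulus of convexity δ_i with δ_i(ε) ≥ δ(ε) for all ε > 0). Then for 1 < p < ∞, the ℓᵖ-direct sum B = (⊕_{i∈I} B_i)_{ℓᵖ}, with norm ‖b‖ = (∑_{i∈I} ‖b_i‖^p)^{1/p}, is uniformly convex. -/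
open scoped ENNReal


/-- Wright-convexity of `rpow`. -/
lemma day_rpow_wright {p a b d : ℝ} (hp : 1 ≤ p) (hb : 0 ≤ b) (hba : b ≤ a) (hd : 0 ≤ d) :
    a ^ p + (b + d) ^ p ≤ b ^ p + (a + d) ^ p := by
  rcases eq_or_lt_of_le (show b ≤ a + d by linarith) with hbad | hbad
  · have h1 : a = b := le_antisymm (by linarith) hba
    have h2 : d = 0 := by linarith
    simp [h1, h2]
  · set L := a + d - b with hL
    have hL0 : 0 < L := by simp [hL]; linarith
    set lam := d / L with hlam
    set mu := (a - b) / L with hmu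
    have hlam0 : 0 ≤ lam := div_nonneg hd hL0.le
    have hmu0 : 0 ≤ mu := div_nonneg (by linarith) hL0.le
    have hsum : lam + mu = 1 := by rw [hlam, hmu, ← add_div, div_eq_one_iff_eq hL0.ne', hL]; ring
    have cvx := convexOn_rpow hp
    have h1 := cvx.2 (Set.mem_Ici.2 hb) (Set.mem_Ici.2 (show (0:ℝ) ≤ a + d by linarith))
      hlam0 hmu0 hsum
    have h2 := cvx.2 (Set.mem_Ici.2 hb) (Set.mem_Ici.2 (show (0:ℝ) ≤ a + d by linarith))
      hmu0 hlam0 (by linarith)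
    simp only [smul_eq_mul] at h1 h2
    have e1 : lam * b + mu * (a + d) = a := by
      rw [hlam, hmu, div_mul_eq_mul_div, div_mul_eq_mul_div, ← add_div, div_eq_iff hL0.ne', hL]; ring
    have e2 : mu * b + lam * (a + d) = b + d := by
      rw [hlam, hmu, div_mul_eq_mul_div, div_mul_eq_mul_div, ← add_div, div_eq_iff hL0.ne', hL]; ring
    rw [e1] at h1
    rw [e2] at h2
    have key := add_le_add h1 h2
    have e3 : lam * b ^ p + mu * (a + d) ^ p + (mu * b ^ p + lam * (a + d) ^ p)
        = b ^ p + (a + d) ^ p := by linear_combination (b ^ p + (a + d) ^ p) * hsum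
    linarith

lemma day_rpow_wright_lt {p a b d : ℝ} (hp : 1 < p) (hb : 0 ≤ b) (hba : b < a) (hd : 0 < d) :
    a ^ p + (b + d) ^ p < b ^ p + (a + d) ^ p := by
  set L := a + d - b with hL
  have hL0 : 0 < L := by simp [hL]; linarith
  set lam := d / L with hlam
  set mu := (a - b) / L with hmu
  have hlam0 : 0 < lam := div_pos hd hL0
  have hmu0 : 0 < mu := div_pos (by linarith) hL0
  have hsum : lam + mu = 1 := by rw [hlam, hmu, ← add_div, div_eq_one_iff_eq hL0.ne', hL]; ring
  have cvx := strictConvexOn_rpow hp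
  have hne : b ≠ a + d := by intro h; linarith
  have h1 := cvx.2 (Set.mem_Ici.2 hb) (Set.mem_Ici.2 (show (0:ℝ) ≤ a + d by linarith)) hne
    hlam0 hmu0 hsum
  have h2 := cvx.2 (Set.mem_Ici.2 hb) (Set.mem_Ici.2 (show (0:ℝ) ≤ a + d by linarith)) hne
    hmu0 hlam0 (by linarith)
  simp only [smul_eq_mul] at h1 h2
  have e1 : lam * b + mu * (a + d) = a := by
    rw [hlam, hmu, div_mul_eq_mul_div, div_mul_eq_mul_div, ← add_div, div_eq_iff hL0.ne', hL]; ring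
  have e2 : mu * b + lam * (a + d) = b + d := by
    rw [hlam, hmu, div_mul_eq_mul_div, div_mul_eq_mul_div, ← add_div, div_eq_iff hL0.ne', hL]; ring
  rw [e1] at h1
  rw [e2] at h2
  have key := add_lt_add h1 h2
  have e3 : lam * b ^ p + mu * (a + d) ^ p + (mu * b ^ p + lam * (a + d) ^ p)
      = b ^ p + (a + d) ^ p := by linear_combination (b ^ p + (a + d) ^ p) * hsum
  linarith

lemma day_ratio_mono {p s t : ℝ} (hp : 1 ≤ p) (hs : 0 ≤ s) (hst : s ≤ t) (ht : t ≤ 1) :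
    (1 + s) ^ p * (1 + t ^ p) ≤ (1 + t) ^ p * (1 + s ^ p) := by
  have ht0 : 0 ≤ t := hs.trans hst
  have h := day_rpow_wright (a := 1 + s) (b := s * (1 + t)) (d := t - s) hp
    (by positivity) (by nlinarith) (by linarith)
  rw [show s * (1 + t) + (t - s) = t * (1 + s) by ring,
    show 1 + s + (t - s) = 1 + t by ring,
    Real.mul_rpow ht0 (by linarith), Real.mul_rpow hs (by linarith)] at h
  nlinarith [h]

lemma day_ratio_lt {p s : ℝ} (hp : 1 < p) (hs : 0 ≤ s) (hs1 : s < 1) :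
    2 * (1 + s) ^ p < 2 ^ p * (1 + s ^ p) := by
  have h := day_rpow_wright_lt (a := 1 + s) (b := 2 * s) (d := 1 - s) hp
    (by linarith) (by linarith) (by linarith)
  rw [show 2 * s + (1 - s) = 1 + s by ring, show 1 + s + (1 - s) = (2:ℝ) by ring,
    Real.mul_rpow (by norm_num) hs] at h
  nlinarith [h]

lemma day_two_pow {q u v : ℝ} (hq : 1 ≤ q) (hu : 0 ≤ u) (hv : 0 ≤ v) :
    (u + v) ^ q ≤ 2 ^ (q - 1) * (u ^ q + v ^ q) := by
  have h := NNReal.rpow_add_le_mul_rpow_add_rpow u.toNNReal v.toNNReal hq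
  rw [← Real.coe_toNNReal u hu, ← Real.coe_toNNReal v hv]
  exact_mod_cast h


lemma day_ball {I : Type*} (B : I → Type*) [∀ i, NormedAddCommGroup (B i)]
    [∀ i, NormedSpace ℝ (B i)]
    (hcommon : ∀ ε : ℝ, 0 < ε → ∃ δ : ℝ, 0 < δ ∧ ∀ i, ∀ x y : B i,
        ‖x‖ = 1 → ‖y‖ = 1 → ε ≤ ‖x - y‖ → ‖x + y‖ ≤ 2 * (1 - δ))
    {ε : ℝ} (hε : 0 < ε) :
    ∃ δ : ℝ, 0 < δ ∧ δ ≤ 1 ∧ ∀ i, ∀ x y : B i,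
      ‖x‖ ≤ 1 → ‖y‖ ≤ 1 → ε ≤ ‖x - y‖ → ‖x + y‖ ≤ 2 - δ := by
  have hε' : 0 < ε / 3 := by linarith
  obtain ⟨δ₀, hδ₀, h⟩ := hcommon (ε / 3) hε'
  set δ : ℝ := 2 * δ₀ with hδdef
  have hδ : 0 < δ := by positivity
  have hsph : ∀ i, ∀ x y : B i, ‖x‖ = 1 → ‖y‖ = 1 → ε / 3 ≤ ‖x - y‖ → ‖x + y‖ ≤ 2 - δ := by
    intro i x y hx hy hxy
    have := h i x y hx hy hxy
    linarith
  set δ' := min (1 / 2) (min (ε / 3) (δ / 3)) with hδ'def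
  have hδ'pos : 0 < δ' := lt_min one_half_pos (lt_min hε' (by linarith))
  refine ⟨δ', hδ'pos, (min_le_left _ _).trans (by norm_num), fun i x y hx hy hxy => ?_⟩
  obtain hx' | hx' := le_or_gt ‖x‖ (1 - δ')
  · rw [← one_add_one_eq_two]
    exact (norm_add_le_of_le hx' hy).trans (sub_add_eq_add_sub _ _ _).le
  obtain hy' | hy' := le_or_gt ‖y‖ (1 - δ')
  · rw [← one_add_one_eq_two]
    exact (norm_add_le_of_le hx hy').trans (add_sub_assoc _ _ _).ge
  have hδ'1 : 0 < 1 - δ' := by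
    have : δ' ≤ 1 / 2 := min_le_left _ _
    linarith
  have h₁ : ∀ z : B i, 1 - δ' < ‖z‖ → ‖‖z‖⁻¹ • z‖ = 1 := by
    rintro z hz
    rw [norm_smul_of_nonneg (inv_nonneg.2 <| norm_nonneg _), inv_mul_cancel₀ (hδ'1.trans hz).ne']
  have h₂ : ∀ z : B i, ‖z‖ ≤ 1 → 1 - δ' ≤ ‖z‖ → ‖‖z‖⁻¹ • z - z‖ ≤ δ' := by
    rintro z hz hδz
    nth_rw 3 [← one_smul ℝ z]
    rwa [← sub_smul,
      norm_smul_of_nonneg (sub_nonneg_of_le <| (one_le_inv₀ (hδ'1.trans_le hδz)).2 hz),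
      sub_mul, inv_mul_cancel₀ (hδ'1.trans_le hδz).ne', one_mul, sub_le_comm]
  set x' := ‖x‖⁻¹ • x
  set y' := ‖y‖⁻¹ • y
  have hxy' : ε / 3 ≤ ‖x' - y'‖ :=
    calc
      ε / 3 = ε - (ε / 3 + ε / 3) := by ring
      _ ≤ ‖x - y‖ - (‖x' - x‖ + ‖y' - y‖) := by
        gcongr
        · exact (h₂ _ hx hx'.le).trans <| min_le_of_right_le <| min_le_left _ _
        · exact (h₂ _ hy hy'.le).trans <| min_le_of_right_le <| min_le_left _ _
      _ ≤ _ := by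
        have : ∀ x' y', x - y = x' - y' + (x - x') + (y' - y) := fun _ _ => by abel
        rw [sub_le_iff_le_add, norm_sub_rev _ x, ← add_assoc, this]
        exact norm_add₃_le
  calc
    ‖x + y‖ ≤ ‖x' + y'‖ + ‖x' - x‖ + ‖y' - y‖ := by
      have : ∀ x' y', x + y = x' + y' + (x - x') + (y - y') := fun _ _ => by abel
      rw [norm_sub_rev, norm_sub_rev y', this]
      exact norm_add₃_le
    _ ≤ 2 - δ + δ' + δ' :=
      (add_le_add_three (hsph i _ _ (h₁ _ hx') (h₁ _ hy') hxy') (h₂ _ hx hx'.le)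
        (h₂ _ hy hy'.le))
    _ ≤ 2 - δ' := by
      have : δ' ≤ δ / 3 := min_le_of_right_le <| min_le_right _ _
      linarith


lemma day_pointwise_unit {I : Type*} (B : I → Type*) [∀ i, NormedAddCommGroup (B i)]
    [∀ i, NormedSpace ℝ (B i)]
    (hcommon : ∀ ε : ℝ, 0 < ε → ∃ δ : ℝ, 0 < δ ∧ ∀ i, ∀ x y : B i,
        ‖x‖ = 1 → ‖y‖ = 1 → ε ≤ ‖x - y‖ → ‖x + y‖ ≤ 2 * (1 - δ))
    {q : ℝ} (hq : 1 < q) {ε : ℝ} (hε : 0 < ε) :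
    ∃ η : ℝ, 0 < η ∧ η ≤ 1 ∧ ∀ i, ∀ x y : B i,
      ‖x‖ = 1 → ‖y‖ ≤ 1 → ε ≤ ‖x - y‖ →
      ‖x + y‖ ^ q ≤ (1 - η) * (2 ^ (q - 1) * (1 + ‖y‖ ^ q)) := by
  have hq0 : (0:ℝ) < q := by linarith
  obtain ⟨δ, hδ0, hδ1, hA⟩ := day_ball B hcommon hε
  set c : ℝ := δ / 4 with hcdef
  have hc0 : 0 < c := by positivity
  have hc1 : c < 1 := by rw [hcdef]; linarith
  have h1c0 : (0:ℝ) ≤ 1 - c := by linarith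
  set Dn : ℝ := 2 ^ (q - 1) * (1 + (1 - c) ^ q) with hDndef
  have hDn : 0 < Dn := by positivity
  have h2q : (2:ℝ) ^ (q - 1) * 2 = 2 ^ q := by
    rw [Real.rpow_sub two_pos, Real.rpow_one]; field_simp
  set r₁ : ℝ := (2 - δ) ^ q / Dn with hr₁def
  set r₂ : ℝ := (2 - c) ^ q / Dn with hr₂def
  have hr₁lt : (2 - δ) ^ q < Dn := by
    have h1 : (2 - δ) ^ q < (2 - 2 * c) ^ q := by
      apply Real.rpow_lt_rpow (by linarith) (by rw [hcdef]; linarith) hq0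
    have h2 : (2 - 2 * c) ^ q = 2 ^ q * (1 - c) ^ q := by
      rw [show (2:ℝ) - 2 * c = 2 * (1 - c) by ring, Real.mul_rpow (by norm_num) h1c0]
    have h3 : (1 - c) ^ q ≤ 1 := Real.rpow_le_one h1c0 (by linarith) hq0.le
    have h4 : (0:ℝ) < 2 ^ (q - 1) := by positivity
    rw [hDndef]
    nlinarith [h1, h2, h3, h4]
  have hr₂lt : (2 - c) ^ q < Dn := by
    have h1 := day_ratio_lt hq h1c0 (by linarith)
    rw [show (1:ℝ) + (1 - c) = 2 - c by ring] at h1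
    have h4 : (0:ℝ) < 2 ^ (q - 1) := by positivity
    rw [hDndef]
    nlinarith [h1, h2q]
  set R : ℝ := max r₁ r₂ with hRdef
  have hr₁0 : 0 ≤ r₁ := div_nonneg (Real.rpow_nonneg (by linarith) _) hDn.le
  have hR0 : 0 ≤ R := le_trans hr₁0 (le_max_left _ _)
  have hR1 : R < 1 := max_lt ((div_lt_one hDn).2 hr₁lt) ((div_lt_one hDn).2 hr₂lt)
  refine ⟨1 - R, by linarith, by linarith, fun i x y hx hy hxy => ?_⟩
  have hsub : (1:ℝ) - (1 - R) = R := by ring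
  rw [hsub]
  set s : ℝ := ‖y‖ with hsdef
  have hs0 : 0 ≤ s := norm_nonneg _
  have hpos : (0:ℝ) ≤ 2 ^ (q - 1) * (1 + s ^ q) := by positivity
  rcases le_or_gt s (1 - c) with hsmall | hlarge
  · have h5 : ‖x + y‖ ≤ 1 + s := by
      calc ‖x + y‖ ≤ ‖x‖ + ‖y‖ := norm_add_le _ _
        _ = 1 + s := by rw [hx]
    have h6 : ‖x + y‖ ^ q ≤ (1 + s) ^ q := Real.rpow_le_rpow (norm_nonneg _) h5 hq0.le
    have h7 : (1 + s) ^ q * (1 + (1 - c) ^ q) ≤ (2 - c) ^ q * (1 + s ^ q) := by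
      have := day_ratio_mono hq.le hs0 hsmall (by linarith)
      rwa [show (1:ℝ) + (1 - c) = 2 - c by ring] at this
    have h8 : (1 + s) ^ q ≤ r₂ * (2 ^ (q - 1) * (1 + s ^ q)) := by
      rw [hr₂def, div_mul_eq_mul_div, le_div_iff₀ hDn, hDndef]
      have h4 : (0:ℝ) < 2 ^ (q - 1) := by positivity
      nlinarith [h7, h4]
    calc ‖x + y‖ ^ q ≤ (1 + s) ^ q := h6
      _ ≤ r₂ * (2 ^ (q - 1) * (1 + s ^ q)) := h8
      _ ≤ R * (2 ^ (q - 1) * (1 + s ^ q)) :=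
        mul_le_mul_of_nonneg_right (le_max_right _ _) hpos
  · have h5 : ‖x + y‖ ≤ 2 - δ := hA i x y hx.le hy hxy
    have h6 : ‖x + y‖ ^ q ≤ (2 - δ) ^ q := Real.rpow_le_rpow (norm_nonneg _) h5 hq0.le
    have h7 : (2 - δ) ^ q = r₁ * Dn := (div_mul_cancel₀ _ hDn.ne').symm
    have h8 : (1 - c) ^ q ≤ s ^ q := Real.rpow_le_rpow h1c0 hlarge.le hq0.le
    calc ‖x + y‖ ^ q ≤ (2 - δ) ^ q := h6
      _ = r₁ * (2 ^ (q - 1) * (1 + (1 - c) ^ q)) := by rw [h7, hDndef]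
      _ ≤ r₁ * (2 ^ (q - 1) * (1 + s ^ q)) := by
          apply mul_le_mul_of_nonneg_left _ hr₁0
          apply mul_le_mul_of_nonneg_left _ (by positivity)
          linarith
      _ ≤ R * (2 ^ (q - 1) * (1 + s ^ q)) :=
        mul_le_mul_of_nonneg_right (le_max_left _ _) hpos

lemma day_pointwise {I : Type*} (B : I → Type*) [∀ i, NormedAddCommGroup (B i)]
    [∀ i, NormedSpace ℝ (B i)]
    (hcommon : ∀ ε : ℝ, 0 < ε → ∃ δ : ℝ, 0 < δ ∧ ∀ i, ∀ x y : B i,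
        ‖x‖ = 1 → ‖y‖ = 1 → ε ≤ ‖x - y‖ → ‖x + y‖ ≤ 2 * (1 - δ))
    {q : ℝ} (hq : 1 < q) {ε : ℝ} (hε : 0 < ε) :
    ∃ η : ℝ, 0 < η ∧ η ≤ 1 ∧ ∀ i, ∀ x y : B i,
      ε * max ‖x‖ ‖y‖ ≤ ‖x - y‖ →
      ‖x + y‖ ^ q ≤ (1 - η) * (2 ^ (q - 1) * (‖x‖ ^ q + ‖y‖ ^ q)) := by
  have hq0 : (0:ℝ) < q := by linarith
  obtain ⟨η, hη0, hη1, hη⟩ := day_pointwise_unit B hcommon hq hε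
  refine ⟨η, hη0, hη1, ?_⟩
  have key : ∀ i, ∀ x y : B i, ‖y‖ ≤ ‖x‖ → ε * max ‖x‖ ‖y‖ ≤ ‖x - y‖ →
      ‖x + y‖ ^ q ≤ (1 - η) * (2 ^ (q - 1) * (‖x‖ ^ q + ‖y‖ ^ q)) := by
    intro i x y hyx hxy
    have hmax : max ‖x‖ ‖y‖ = ‖x‖ := max_eq_left hyx
    rw [hmax] at hxy
    by_cases hx0 : ‖x‖ = 0
    · have hy0 : ‖y‖ = 0 := le_antisymm (hx0 ▸ hyx) (norm_nonneg _)
      have hx : x = 0 := norm_eq_zero.1 hx0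
      have hy : y = 0 := norm_eq_zero.1 hy0
      simp [hx, hy, Real.zero_rpow hq0.ne']
    · have hr : 0 < ‖x‖ := (norm_nonneg x).lt_of_ne' hx0
      set r : ℝ := ‖x‖ with hrdef
      have hinv : (0:ℝ) < r⁻¹ := inv_pos.2 hr
      have hx' : ‖r⁻¹ • x‖ = 1 := by
        rw [norm_smul, Real.norm_eq_abs, abs_of_pos hinv, inv_mul_cancel₀ hr.ne']
      have e2 : ‖r⁻¹ • y‖ = r⁻¹ * ‖y‖ := by
        rw [norm_smul, Real.norm_eq_abs, abs_of_pos hinv]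
      have hy' : ‖r⁻¹ • y‖ ≤ 1 := by
        rw [e2]
        calc r⁻¹ * ‖y‖ ≤ r⁻¹ * r := by
              apply mul_le_mul_of_nonneg_left hyx hinv.le
          _ = 1 := inv_mul_cancel₀ hr.ne'
      have hxy' : ε ≤ ‖r⁻¹ • x - r⁻¹ • y‖ := by
        rw [← smul_sub, norm_smul, Real.norm_eq_abs, abs_of_pos hinv]
        calc ε = r⁻¹ * (ε * r) := by field_simp
          _ ≤ r⁻¹ * ‖x - y‖ := mul_le_mul_of_nonneg_left hxy hinv.le
      have h := hη i (r⁻¹ • x) (r⁻¹ • y) hx' hy' hxy'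
      have e1 : ‖r⁻¹ • x + r⁻¹ • y‖ = r⁻¹ * ‖x + y‖ := by
        rw [← smul_add, norm_smul, Real.norm_eq_abs, abs_of_pos hinv]
      rw [e1, e2] at h
      have hrq : (0:ℝ) < r ^ q := Real.rpow_pos_of_pos hr q
      have e3 : r ^ q * (r⁻¹ * ‖x + y‖) ^ q = ‖x + y‖ ^ q := by
        rw [← Real.mul_rpow hr.le (by positivity)]
        congr 1
        field_simp
      have e5 : r ^ q * (r⁻¹ * ‖y‖) ^ q = ‖y‖ ^ q := by
        rw [← Real.mul_rpow hr.le (by positivity)]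
        congr 1
        field_simp
      calc ‖x + y‖ ^ q = r ^ q * (r⁻¹ * ‖x + y‖) ^ q := e3.symm
        _ ≤ r ^ q * ((1 - η) * (2 ^ (q - 1) * (1 + (r⁻¹ * ‖y‖) ^ q))) :=
            mul_le_mul_of_nonneg_left h hrq.le
        _ = (1 - η) * (2 ^ (q - 1) * (r ^ q + r ^ q * ((r⁻¹ * ‖y‖) ^ q))) := by ring
        _ = (1 - η) * (2 ^ (q - 1) * (‖x‖ ^ q + ‖y‖ ^ q)) := by rw [e5, hrdef]
  intro i x y hxy
  rcases le_total ‖y‖ ‖x‖ with h | h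
  · exact key i x y h hxy
  · have hxy2 : ε * max ‖y‖ ‖x‖ ≤ ‖y - x‖ := by
      rwa [max_comm, norm_sub_rev] at hxy
    have := key i y x h hxy2
    rwa [add_comm y x, add_comm (‖y‖ ^ q)] at this


/-- Generalized Day theorem: the ℓᵖ-direct sum (`1 < p < ∞`) of an arbitrary family of
uniformly convex Banach spaces with a common modulus of convexity is uniformly convex. -/
theorem uniformConvex_lp_of_common_modulus {I : Type*} (B : I → Type*)
    [∀ i, NormedAddCommGroup (B i)] [∀ i, NormedSpace ℝ (B i)] [∀ i, CompleteSpace (B i)]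
    (hUC : ∀ i, UniformConvexSpace (B i))
    (hcommon : ∀ ε : ℝ, 0 < ε → ∃ δ : ℝ, 0 < δ ∧ ∀ i, ∀ x y : B i,
        ‖x‖ = 1 → ‖y‖ = 1 → ε ≤ ‖x - y‖ → ‖x + y‖ ≤ 2 * (1 - δ))
    (p : ℝ≥0∞) [Fact (1 ≤ p)] (hp1 : 1 < p) (hp2 : p ≠ ⊤) :
    UniformConvexSpace (lp B p) := by
  set q : ℝ := p.toReal with hqdef
  have hq : 1 < q := by
    rw [hqdef, ← ENNReal.toReal_one]
    exact (ENNReal.toReal_lt_toReal ENNReal.one_ne_top hp2).2 hp1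
  have hq0 : (0:ℝ) < q := by linarith
  have h2q1 : (0:ℝ) < 2 ^ (q - 1) := by positivity
  have h2q : (0:ℝ) < 2 ^ q := by positivity
  have h2qe : (2:ℝ) ^ (q - 1) = 2 ^ q / 2 := by
    rw [Real.rpow_sub two_pos, Real.rpow_one]
  constructor
  intro ε hε
  set ε₀ : ℝ := min ε 2 with hε₀def
  have hε₀ : 0 < ε₀ := lt_min hε two_pos
  have hε₀2 : ε₀ ≤ 2 := min_le_right _ _
  obtain ⟨η, hη0, hη1, hη⟩ := day_pointwise B hcommon hq (half_pos hε₀)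
  set m : ℝ := (ε₀ ^ q - 2 * (ε₀ / 2) ^ q) / 2 ^ (q - 1) with hmdef
  have hhalf : (ε₀ / 2) ^ q = ε₀ ^ q / 2 ^ q := Real.div_rpow hε₀.le (by norm_num : (0:ℝ) ≤ 2) q
  have h21q : (2:ℝ) ^ (1 - q) < 1 :=
    Real.rpow_lt_one_of_one_lt_of_neg one_lt_two (by linarith)
  have h21qe : (2:ℝ) ^ (1 - q) = 2 / 2 ^ q := by
    rw [Real.rpow_sub two_pos, Real.rpow_one]
  have hε₀q : 0 < ε₀ ^ q := Real.rpow_pos_of_pos hε₀ q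
  have hnum : 0 < ε₀ ^ q - 2 * (ε₀ / 2) ^ q := by
    rw [hhalf]
    have : 2 * (ε₀ ^ q / 2 ^ q) = ε₀ ^ q * (2 / 2 ^ q) := by ring
    rw [this, ← h21qe]
    nlinarith [hε₀q, h21q, Real.rpow_nonneg (show (0:ℝ) ≤ 2 by norm_num) (1 - q)]
  have hm0 : 0 < m := div_pos hnum h2q1
  have hm2 : m ≤ 2 := by
    rw [hmdef, div_le_iff₀ h2q1, h2qe]
    have h1 : ε₀ ^ q ≤ 2 ^ q := Real.rpow_le_rpow hε₀.le hε₀2 hq0.le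
    have h2 : 0 ≤ (ε₀ / 2) ^ q := Real.rpow_nonneg (by positivity) q
    linarith
  set D : ℝ := η * m / 2 with hDdef
  have hD0 : 0 < D := by positivity
  have hD1 : D ≤ 1 := by
    rw [hDdef]
    nlinarith [hη0, hm0]
  have hroot : (1 - D) ^ (1 / q) < 1 :=
    Real.rpow_lt_one (by linarith) (by linarith) (by positivity)
  refine ⟨2 - 2 * (1 - D) ^ (1 / q), by linarith, ?_⟩
  intro x hx y hy hxy
  have hε₀xy : ε₀ ≤ ‖x - y‖ := le_trans (min_le_left _ _) hxy
  set A : Set I := {i | ε₀ / 2 * max ‖x i‖ ‖y i‖ ≤ ‖x i - y i‖} with hAdef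
  set a : I → ℝ := fun i => ‖x i‖ ^ q + ‖y i‖ ^ q with hadef
  have ha_nonneg : ∀ i, 0 ≤ a i := fun i => by positivity
  have hax : Summable fun i => ‖x i‖ ^ q := (lp.memℓp x).summable hq0
  have hay : Summable fun i => ‖y i‖ ^ q := (lp.memℓp y).summable hq0
  have ha : Summable a := hax.add hay
  have hsa : ∑' i, a i = 2 := by
    rw [hadef, Summable.tsum_add hax hay, ← lp.norm_rpow_eq_tsum hq0 x, ← lp.norm_rpow_eq_tsum hq0 y,
      hx, hy, Real.one_rpow]
    norm_num
  have hS : Summable fun i => ‖x i + y i‖ ^ q := by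
    refine ((lp.memℓp (x + y)).summable hq0).congr fun i => ?_
    simp [lp.coeFn_add, hqdef]
  have hd_summ : Summable fun i => ‖x i - y i‖ ^ q := by
    refine ((lp.memℓp (x - y)).summable hq0).congr fun i => ?_
    simp [lp.coeFn_sub, hqdef]
  have hind : Summable (A.indicator a) := ha.indicator A
  set T : ℝ := ∑' i, A.indicator a i with hTdef
  have hmaxq : ∀ i, (max ‖x i‖ ‖y i‖) ^ q ≤ a i := by
    intro i
    rcases max_choice ‖x i‖ ‖y i‖ with h | h <;> rw [h]
    · have : 0 ≤ ‖y i‖ ^ q := Real.rpow_nonneg (norm_nonneg _) q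
      simp [hadef]; linarith
    · have : 0 ≤ ‖x i‖ ^ q := Real.rpow_nonneg (norm_nonneg _) q
      simp [hadef]; linarith
  have hpt2 : ∀ i, ‖x i - y i‖ ^ q ≤ (ε₀ / 2) ^ q * a i + 2 ^ (q - 1) * A.indicator a i := by
    intro i
    by_cases hiA : i ∈ A
    · rw [Set.indicator_of_mem hiA]
      have h1 : ‖x i - y i‖ ^ q ≤ (‖x i‖ + ‖y i‖) ^ q :=
        Real.rpow_le_rpow (norm_nonneg _) (norm_sub_le _ _) hq0.le
      have h2 := day_two_pow hq.le (norm_nonneg (x i)) (norm_nonneg (y i))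
      have h3 : 0 ≤ (ε₀ / 2) ^ q * a i := by positivity
      simp only [hadef] at *
      linarith
    · rw [Set.indicator_of_notMem hiA, mul_zero, add_zero]
      have hlt : ‖x i - y i‖ < ε₀ / 2 * max ‖x i‖ ‖y i‖ := lt_of_not_ge hiA
      calc ‖x i - y i‖ ^ q ≤ (ε₀ / 2 * max ‖x i‖ ‖y i‖) ^ q :=
            Real.rpow_le_rpow (norm_nonneg _) hlt.le hq0.le
        _ = (ε₀ / 2) ^ q * (max ‖x i‖ ‖y i‖) ^ q :=
            Real.mul_rpow (by positivity) (le_max_of_le_left (norm_nonneg _))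
        _ ≤ (ε₀ / 2) ^ q * a i :=
            mul_le_mul_of_nonneg_left (hmaxq i) (by positivity)
  have hdnorm : ‖x - y‖ ^ q = ∑' i, ‖x i - y i‖ ^ q := by
    rw [lp.norm_rpow_eq_tsum hq0]
    exact tsum_congr fun i => by simp [lp.coeFn_sub, hqdef]
  have hsum2 : ‖x - y‖ ^ q ≤ (ε₀ / 2) ^ q * 2 + 2 ^ (q - 1) * T := by
    rw [hdnorm]
    calc ∑' i, ‖x i - y i‖ ^ q
        ≤ ∑' i, ((ε₀ / 2) ^ q * a i + 2 ^ (q - 1) * A.indicator a i) :=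
          Summable.tsum_le_tsum hpt2 hd_summ ((ha.mul_left _).add (hind.mul_left _))
      _ = (ε₀ / 2) ^ q * (∑' i, a i) + 2 ^ (q - 1) * T := by
          rw [Summable.tsum_add (ha.mul_left _) (hind.mul_left _), tsum_mul_left, tsum_mul_left]
      _ = (ε₀ / 2) ^ q * 2 + 2 ^ (q - 1) * T := by rw [hsa]
  have hεq : ε₀ ^ q ≤ ‖x - y‖ ^ q := Real.rpow_le_rpow hε₀.le hε₀xy hq0.le
  have hT : m ≤ T := by
    rw [hmdef, div_le_iff₀ h2q1]
    linarith [hsum2, hεq]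
  have hpt1 : ∀ i, ‖x i + y i‖ ^ q ≤ 2 ^ (q - 1) * a i - η * 2 ^ (q - 1) * A.indicator a i := by
    intro i
    by_cases hiA : i ∈ A
    · rw [Set.indicator_of_mem hiA]
      have hiA' : ε₀ / 2 * max ‖x i‖ ‖y i‖ ≤ ‖x i - y i‖ := hiA
      have h1 := hη i (x i) (y i) hiA'
      calc ‖x i + y i‖ ^ q ≤ (1 - η) * (2 ^ (q - 1) * (‖x i‖ ^ q + ‖y i‖ ^ q)) := h1
        _ = 2 ^ (q - 1) * a i - η * 2 ^ (q - 1) * a i := by rw [hadef]; ring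
    · rw [Set.indicator_of_notMem hiA, mul_zero, sub_zero]
      calc ‖x i + y i‖ ^ q ≤ (‖x i‖ + ‖y i‖) ^ q :=
            Real.rpow_le_rpow (norm_nonneg _) (norm_add_le _ _) hq0.le
        _ ≤ 2 ^ (q - 1) * a i := day_two_pow hq.le (norm_nonneg _) (norm_nonneg _)
  have hfinal : ‖x + y‖ ^ q ≤ 2 ^ q * (1 - D) := by
    have hsnorm : ‖x + y‖ ^ q = ∑' i, ‖x i + y i‖ ^ q := by
      rw [lp.norm_rpow_eq_tsum hq0]
      exact tsum_congr fun i => by simp [lp.coeFn_add, hqdef]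
    rw [hsnorm]
    calc ∑' i, ‖x i + y i‖ ^ q
        ≤ ∑' i, (2 ^ (q - 1) * a i - η * 2 ^ (q - 1) * A.indicator a i) :=
          Summable.tsum_le_tsum hpt1 hS ((ha.mul_left _).sub (hind.mul_left _))
      _ = 2 ^ (q - 1) * (∑' i, a i) - η * 2 ^ (q - 1) * T := by
          rw [Summable.tsum_sub (ha.mul_left _) (hind.mul_left _), tsum_mul_left, tsum_mul_left]
      _ = 2 ^ (q - 1) * 2 - η * 2 ^ (q - 1) * T := by rw [hsa]
      _ ≤ 2 ^ q * (1 - D) := by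
          rw [hDdef, h2qe]
          have hmono : η * (2 ^ q / 2) * m ≤ η * (2 ^ q / 2) * T :=
            mul_le_mul_of_nonneg_left hT (by positivity)
          linarith
  have hb0 : (0:ℝ) ≤ 2 * (1 - D) ^ (1 / q) := by
    have := Real.rpow_nonneg (show (0:ℝ) ≤ 1 - D by linarith) (1 / q)
    linarith
  have hpow : (2 * (1 - D) ^ (1 / q)) ^ q = 2 ^ q * (1 - D) := by
    rw [Real.mul_rpow (by norm_num) (Real.rpow_nonneg (by linarith) _),
      ← Real.rpow_mul (by linarith : (0:ℝ) ≤ 1 - D), one_div,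
      inv_mul_cancel₀ hq0.ne', Real.rpow_one]
  have : ‖x + y‖ ≤ 2 * (1 - D) ^ (1 / q) := by
    have hle : ‖x + y‖ ^ q ≤ (2 * (1 - D) ^ (1 / q)) ^ q := by rw [hpow]; exact hfinal
    exact (Real.rpow_le_rpow_iff (norm_nonneg _) hb0 hq0).1 hle
  linarith
end
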